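/- Let G be a graph on n vertices with minimum degree δ(G) ≥ n/2. Then either G is pancyclic (contains cycles of every length from 3 to n), or n is even and G is the complete bipartite graph K_{n/2,n/2}. -/

import Mathlib

/-- A Gallai coloring: a symmetric edge-coloring of a complete graph with no
rainbow triangle (no triangle whose three edges get three distinct colors). -/
def IsGallai {V C : Type*} (c : V → V → C) : Prop :=
  (∀ u v, c u v = c v u) ∧
  ∀ u v w : V, u ≠ v → v ≠ w → u ≠ w →
    (c u v = c v w ∨ c v w = c u w ∨ c u v = c u w)

/-- The coloring `c` contains a cycle on `m` vertices all of whose edges have color `col`. -/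
def HasCycleColor {V C : Type*} (c : V → V → C) (m : ℕ) (col : C) : Prop :=
  ∃ f : ZMod m → V, Function.Injective f ∧ ∀ i : ZMod m, c (f i) (f (i + 1)) = col

/-- The coloring `c` contains a monochromatic cycle on `m` vertices. -/
def HasMonoCycle {V C : Type*} (c : V → V → C) (m : ℕ) : Prop :=
  ∃ col : C, HasCycleColor c m col

/-- The simple graph `G` contains a cycle on `m` vertices. -/
def GraphHasCycleLength {V : Type*} (G : SimpleGraph V) (m : ℕ) : Prop :=
  ∃ f : ZMod m → V, Function.Injective f ∧ ∀ i : ZMod m, G.Adj (f i) (f (i + 1))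

namespace BondyAux

lemma natCast_val_eq {m : ℕ} [NeZero m] (x : ZMod m) : ((x.val : ℕ) : ZMod m) = x :=
  ZMod.natCast_rightInverse x


lemma cast_inj_of_lt {m : ℕ} [NeZero m] {a b : ℕ} (ha : a < m) (hb : b < m)
    (h : (a : ZMod m) = b) : a = b := by
  have := congrArg ZMod.val h
  rwa [ZMod.val_natCast, ZMod.val_natCast, Nat.mod_eq_of_lt ha, Nat.mod_eq_of_lt hb] at this


lemma cast_eq_zero_iff' {m : ℕ} [NeZero m] {a : ℕ} (ha : a < m) (h : (a : ZMod m) = 0) :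
    a = 0 := by
  have := cast_inj_of_lt (m := m) ha (Nat.pos_of_ne_zero (NeZero.ne m)) (by simpa using h)
  omega


lemma mkCycle {V : Type*} (G : SimpleGraph V) (m : ℕ) (hm : 0 < m) (F : ℕ → V)
    (hinj : ∀ a, a < m → ∀ b, b < m → F a = F b → a = b)
    (hadj : ∀ a, a + 1 < m → G.Adj (F a) (F (a+1)))
    (hwrap : G.Adj (F (m-1)) (F 0)) : GraphHasCycleLength G m := by
  haveI : NeZero m := ⟨hm.ne'⟩
  refine ⟨fun i => F i.val, ?_, ?_⟩
  · intro i j h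
    exact ZMod.val_injective m (hinj _ (ZMod.val_lt i) _ (ZMod.val_lt j) h)
  · intro i
    have hv : (i + 1).val = (i.val + 1) % m := by
      conv_lhs => rw [← natCast_val_eq i]
      rw [← Nat.cast_one, ← Nat.cast_add, ZMod.val_natCast]
    have hiv := ZMod.val_lt i
    rcases Nat.lt_or_ge (i.val + 1) m with h | h
    · have : (i+1).val = i.val + 1 := by rw [hv, Nat.mod_eq_of_lt h]
      simp only [this]
      exact hadj _ h
    · have h1 : i.val = m - 1 := by omega
      have h2 : i.val + 1 = m := by omega
      have : (i+1).val = 0 := by rw [hv, h2, Nat.mod_self]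
      simp only [this, h1]
      exact hwrap

/-- hub + arc of a cycle gives a cycle of length ℓ -/


lemma cycleThrough {V : Type*} (G : SimpleGraph V) {m : ℕ} [NeZero m]
    (g : ZMod m → V) (hg : Function.Injective g)
    (hadj : ∀ i, G.Adj (g i) (g (i+1))) (v : V) (hv : ∀ i, v ≠ g i)
    (t : ZMod m) (ℓ : ℕ) (hl : 3 ≤ ℓ) (hlm : ℓ ≤ m + 1)
    (h1 : G.Adj v (g t)) (h2 : G.Adj v (g (t + ((ℓ - 2 : ℕ) : ZMod m)))) :
    GraphHasCycleLength G ℓ := by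
  apply mkCycle G ℓ (by omega) (fun a => if a = 0 then v else g (t + ((a - 1 : ℕ) : ZMod m)))
  · have hm : 0 < m := Nat.pos_of_ne_zero (NeZero.ne m)
    intro a ha b hb h
    rcases eq_or_ne a 0 with rfl | ha0 <;> rcases eq_or_ne b 0 with rfl | hb0
    · rfl
    · simp only [if_pos rfl, if_neg hb0] at h; exact absurd h (hv _)
    · simp only [if_pos rfl, if_neg ha0] at h; exact absurd h.symm (hv _)
    · simp only [if_neg ha0, if_neg hb0] at h
      have h' := add_left_cancel (hg h)
      have := cast_inj_of_lt (m := m) (a := a - 1) (b := b - 1) (by omega) (by omega) h'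
      omega
  · intro a ha
    rcases eq_or_ne a 0 with rfl | ha0
    · simpa using h1
    · have : a + 1 ≠ 0 := by omega
      simp only [if_neg ha0, if_neg this]
      have : ((a + 1 - 1 : ℕ) : ZMod m) = ((a - 1 : ℕ) : ZMod m) + 1 := by
        have : a + 1 - 1 = (a - 1) + 1 := by omega
        rw [this]; push_cast; ring
      rw [this, ← add_assoc]
      exact hadj _
  · have h3 : ℓ - 1 ≠ 0 := by omega
    simp only [if_neg h3, if_pos rfl]
    have : ℓ - 1 - 1 = ℓ - 2 := by omega
    rw [this]
    exact h2.symm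

/-- two large subsets of ZMod m intersect after a shift -/


lemma shift_inter {m : ℕ} [NeZero m] (W : Finset (ZMod m)) (hW : m < 2 * W.card)
    (c : ZMod m) : ∃ t, t ∈ W ∧ t + c ∈ W := by
  classical
  set W' : Finset (ZMod m) := W.image (fun x => x - c) with hW'
  have hcard : W'.card = W.card := Finset.card_image_of_injective _ (sub_left_injective)
  have hinter : (W ∩ W').Nonempty := by
    by_contra h
    have hd : Disjoint W W' := by
      rw [Finset.disjoint_iff_inter_eq_empty]
      exact Finset.not_nonempty_iff_eq_empty.mp h
    have := Finset.card_union_of_disjoint hd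
    have hle : (W ∪ W').card ≤ Fintype.card (ZMod m) := Finset.card_le_univ _
    rw [ZMod.card] at hle
    omega
  obtain ⟨x, hx⟩ := hinter
  rw [Finset.mem_inter] at hx
  obtain ⟨y, hy, hxy⟩ := Finset.mem_image.mp hx.2
  exact ⟨x, hx.1, by rw [← hxy]; simpa using hy⟩


lemma chordPair {V : Type*} (G : SimpleGraph V) {n : ℕ} (hn : 3 ≤ n)
    (f : ZMod n → V) (hf : Function.Injective f) (hham : ∀ i, G.Adj (f i) (f (i+1)))
    {i j : ZMod n} (hji : j ≠ i) (hji' : j ≠ i - 1)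
    (h1 : G.Adj (f i) (f j)) (h2 : G.Adj (f (i+1)) (f (j+2))) :
    GraphHasCycleLength G (n-1) := by
  haveI : NeZero n := ⟨by omega⟩
  set a : ℕ := (j - i).val with ha
  have hvala : ((a : ℕ) : ZMod n) = j - i := natCast_val_eq _
  have han : a < n := ZMod.val_lt _
  have ha1 : 1 ≤ a := by
    rcases Nat.eq_zero_or_pos a with h | h
    · exfalso; apply sub_ne_zero_of_ne hji
      rw [← hvala, h, Nat.cast_zero]
    · exact h
  have ha2 : a ≤ n - 2 := by
    by_contra h
    have : a = n - 1 := by omega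
    apply hji'
    have : ((a : ℕ) : ZMod n) = -1 := by
      rw [this]
      have : ((n - 1 : ℕ) : ZMod n) = (n : ZMod n) - 1 := by
        push_cast [Nat.cast_sub (by omega : 1 ≤ n)]; ring
      rw [this, ZMod.natCast_self]; ring
    rw [this] at hvala
    linear_combination (norm := ring_nf) -hvala
  have hkey : i + (a : ZMod n) = j := by rw [hvala]; ring
  apply mkCycle G (n-1) (by omega)
    (fun c => f (if c < a then i + 1 + (c : ZMod n) else i - ((c - a : ℕ) : ZMod n)))
  · intro c hc d hd h
    have h' := hf h
    rcases Nat.lt_or_ge c a with hca | hca <;> rcases Nat.lt_or_ge d a with hda | hda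
    · rw [if_pos hca, if_pos hda] at h'
      exact cast_inj_of_lt (m := n) (by omega) (by omega) (by
        have := add_left_cancel h'; exact this)
    · rw [if_pos hca, if_neg (by omega)] at h'
      exfalso
      have hz : ((c + 1 + (d - a) : ℕ) : ZMod n) = 0 := by
        push_cast
        linear_combination h'
      have := cast_eq_zero_iff' (m := n) (by omega) hz
      omega
    · rw [if_neg (by omega), if_pos hda] at h'
      exfalso
      have hz : ((d + 1 + (c - a) : ℕ) : ZMod n) = 0 := by
        push_cast
        linear_combination -h'
      have := cast_eq_zero_iff' (m := n) (by omega) hz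
      omega
    · rw [if_neg (by omega), if_neg (by omega)] at h'
      have : ((c - a : ℕ) : ZMod n) = ((d - a : ℕ) : ZMod n) := by
        linear_combination -h'
      have := cast_inj_of_lt (m := n) (by omega) (by omega) this
      omega
  · intro c hc
    rcases Nat.lt_or_ge (c+1) a with hca | hca
    · rw [if_pos (by omega), if_pos hca]
      have : ((c + 1 : ℕ) : ZMod n) = (c : ZMod n) + 1 := by push_cast; ring
      rw [this, ← add_assoc]
      have := hham (i + 1 + (c : ZMod n))
      convert this using 3 <;> ring
    · rcases Nat.eq_or_lt_of_le hca with heq | hlt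
      · rw [if_pos (by omega), if_neg (by omega)]
        have e1 : i + 1 + ((c : ℕ) : ZMod n) = j := by
          rw [← hkey, heq]; push_cast; ring
        have e2 : i - ((c + 1 - a : ℕ) : ZMod n) = i := by
          rw [← heq]; simp
        rw [e1, e2]
        exact h1.symm
      · rw [if_neg (by omega), if_neg (by omega)]
        have e1 : ((c + 1 - a : ℕ) : ZMod n) = ((c - a : ℕ) : ZMod n) + 1 := by
          have : c + 1 - a = (c - a) + 1 := by omega
          rw [this]; push_cast; ring
        rw [e1]
        have h3 := hham (i - (((c - a : ℕ) : ZMod n) + 1))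
        have e3 : i - (((c - a : ℕ) : ZMod n) + 1) + 1 = i - ((c - a : ℕ) : ZMod n) := by ring
        rw [e3] at h3
        exact h3.symm
  · have e0 : (if 0 < a then i + 1 + ((0:ℕ) : ZMod n) else i - (((0:ℕ) - a : ℕ) : ZMod n)) = i + 1 := by
      rw [if_pos (by omega)]; simp
    have hm1 : n - 1 - 1 = n - 2 := by omega
    rw [hm1, if_neg (by omega), e0]
    have e2 : i - ((n - 2 - a : ℕ) : ZMod n) = j + 2 := by
      have hc : ((n - 2 - a : ℕ) : ZMod n) = (0 : ZMod n) - 2 - a := by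
        push_cast [Nat.cast_sub (by omega : a ≤ n - 2), Nat.cast_sub (by omega : 2 ≤ n)]
        rw [ZMod.natCast_self]
      rw [hc, ← hkey]; ring
    rw [e2]
    exact h2.symm


lemma dirac {V : Type*} [Fintype V] (G : SimpleGraph V) [DecidableRel G.Adj]
    (hn : 3 ≤ Fintype.card V) (hdeg : Fintype.card V ≤ 2 * G.minDegree) :
    GraphHasCycleLength G (Fintype.card V) := by
  classical
  set n := Fintype.card V with hnn
  clear_value n
  set P : ℕ → Prop := fun k =>
    ∃ F : ℕ → V, (∀ a, a < k → ∀ b, b < k → F a = F b → a = b) ∧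
      (∀ a, a + 1 < k → G.Adj (F a) (F (a+1))) with hP
  have hPn : ∀ k, P k → k ≤ n := by
    rintro k ⟨F, hFi, -⟩
    have : ((Finset.range k).image F).card = k := by
      rw [Finset.card_image_of_injOn, Finset.card_range]
      intro a ha b hb h
      exact hFi a (Finset.mem_range.mp ha) b (Finset.mem_range.mp hb) h
    have h2 := Finset.card_le_univ ((Finset.range k).image F)
    rw [← hnn] at h2
    omega
  -- minimum degree bound
  have hmd : 2 ≤ G.minDegree := by omega
  have hdegv : ∀ v : V, n ≤ 2 * G.degree v := fun v =>
    le_trans hdeg (by have := G.minDegree_le_degree v; omega)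
  -- P 2
  have hP2 : P 2 := by
    have hV : 0 < Fintype.card V := by omega
    obtain ⟨v⟩ := Fintype.card_pos_iff.mp hV
    have hdv : 0 < G.degree v := by have := hdegv v; omega
    rw [SimpleGraph.degree, Finset.card_pos] at hdv
    obtain ⟨w, hw⟩ := hdv
    rw [SimpleGraph.mem_neighborFinset] at hw
    refine ⟨fun a => if a = 0 then v else w, ?_, ?_⟩
    · intro a ha b hb h
      dsimp only at h
      rcases eq_or_ne a 0 with rfl | ha0 <;> rcases eq_or_ne b 0 with rfl | hb0
      · rfl
      · rw [if_pos rfl, if_neg hb0] at h; exact absurd h hw.ne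
      · rw [if_neg ha0, if_pos rfl] at h; exact absurd h.symm hw.ne
      · omega
    · intro a ha
      have ha0 : a = 0 := by omega
      subst ha0
      simpa using hw
  set k := Nat.findGreatest P n with hkdef
  have hk : P k := Nat.findGreatest_spec (P := P) (by omega : 2 ≤ n) hP2
  have hk2 : 2 ≤ k := Nat.le_findGreatest (by omega) hP2
  have hkn : k ≤ n := hPn k hk
  have hmax : ¬ P (k + 1) := by
    intro h
    have h1 : k + 1 ≤ n := hPn _ h
    have := Nat.le_findGreatest h1 h
    omega
  clear_value k
  obtain ⟨F, hFi, hFa⟩ := hk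
  -- all neighbors of the endpoints lie on the path
  have hN0 : ∀ w, G.Adj (F 0) w → ∃ s, s < k ∧ F s = w := by
    intro w hw
    by_contra h
    push_neg at h
    apply hmax
    refine ⟨fun a => if a = 0 then w else F (a - 1), ?_, ?_⟩
    · intro a ha b hb hab
      rcases eq_or_ne a 0 with rfl | ha0 <;> rcases eq_or_ne b 0 with rfl | hb0
      · rfl
      · simp only [if_pos rfl, if_neg hb0] at hab
        exact absurd hab.symm (h (b-1) (by omega))
      · simp only [if_pos rfl, if_neg ha0] at hab
        exact absurd hab (h (a-1) (by omega))
      · simp only [if_neg ha0, if_neg hb0] at hab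
        have := hFi (a-1) (by omega) (b-1) (by omega) hab
        omega
    · intro a ha
      rcases eq_or_ne a 0 with rfl | ha0
      · simpa using hw.symm
      · have h1 : a + 1 ≠ 0 := by omega
        simp only [if_neg ha0, if_neg h1]
        have h2 : a + 1 - 1 = (a - 1) + 1 := by omega
        rw [h2]
        exact hFa (a-1) (by omega)
  have hNk : ∀ w, G.Adj (F (k-1)) w → ∃ s, s < k ∧ F s = w := by
    intro w hw
    by_contra h
    push_neg at h
    apply hmax
    refine ⟨fun a => if a < k then F a else w, ?_, ?_⟩
    · intro a ha b hb hab
      rcases Nat.lt_or_ge a k with ha0 | ha0 <;> rcases Nat.lt_or_ge b k with hb0 | hb0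
      · simp only [if_pos ha0, if_pos hb0] at hab
        exact hFi a ha0 b hb0 hab
      · simp only [if_pos ha0, if_neg (by omega : ¬ b < k)] at hab
        exact absurd hab (h a ha0)
      · simp only [if_neg (by omega : ¬ a < k), if_pos hb0] at hab
        exact absurd hab.symm (h b hb0)
      · omega
    · intro a ha
      rcases Nat.lt_or_ge (a+1) k with ha0 | ha0
      · simp only [if_pos ha0, if_pos (by omega : a < k)]
        exact hFa a ha0
      · have ha1 : a = k - 1 := by omega
        subst ha1
        dsimp only
        rw [if_pos (by omega : k - 1 < k), if_neg (by omega : ¬ k - 1 + 1 < k)]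
        exact hw
  -- index function
  have idxspec : ∀ w : V, (∃ s, s < k ∧ F s = w) → (∃ s, s < k ∧ F s = w) := fun _ h => h
  set idx : V → ℕ := fun w => if h : ∃ s, s < k ∧ F s = w then h.choose else 0 with hidx
  have idxlt : ∀ w, (∃ s, s < k ∧ F s = w) → idx w < k ∧ F (idx w) = w := by
    intro w h
    simp only [hidx, dif_pos h]
    exact h.choose_spec
  -- the two chord sets
  set A : Finset ℕ := (Finset.range (k-1)).filter (fun t => G.Adj (F (t+1)) (F 0)) with hA
  set B : Finset ℕ := (Finset.range (k-1)).filter (fun t => G.Adj (F t) (F (k-1))) with hB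
  have hcardA : G.degree (F 0) ≤ A.card := by
    apply Finset.card_le_card_of_injOn (fun w => idx w - 1)
    · intro w hw
      simp only [Finset.mem_coe] at hw ⊢
      rw [SimpleGraph.mem_neighborFinset] at hw
      obtain ⟨hlt, heq⟩ := idxlt w (hN0 w hw)
      have hne : idx w ≠ 0 := by
        intro h0
        rw [h0] at heq
        exact G.irrefl (heq ▸ hw)
      rw [hA, Finset.mem_filter, Finset.mem_range]
      refine ⟨by omega, ?_⟩
      have h5 : idx w - 1 + 1 = idx w := by omega
      rw [h5, heq]
      exact hw.symm
    · intro w1 h1 w2 h2 h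
      rw [Finset.mem_coe, SimpleGraph.mem_neighborFinset] at h1 h2
      obtain ⟨hl1, he1⟩ := idxlt w1 (hN0 w1 h1)
      obtain ⟨hl2, he2⟩ := idxlt w2 (hN0 w2 h2)
      have hn1 : idx w1 ≠ 0 := by
        intro h0; rw [h0] at he1; exact G.irrefl (he1 ▸ h1)
      have hn2 : idx w2 ≠ 0 := by
        intro h0; rw [h0] at he2; exact G.irrefl (he2 ▸ h2)
      have h' : idx w1 - 1 = idx w2 - 1 := h
      have h'' : idx w1 = idx w2 := by omega
      rw [← he1, ← he2, h'']
  have hcardB : G.degree (F (k-1)) ≤ B.card := by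
    apply Finset.card_le_card_of_injOn (fun w => idx w)
    · intro w hw
      simp only [Finset.mem_coe] at hw ⊢
      rw [SimpleGraph.mem_neighborFinset] at hw
      obtain ⟨hlt, heq⟩ := idxlt w (hNk w hw)
      have hne : idx w ≠ k - 1 := by
        intro h0
        rw [h0] at heq
        exact G.irrefl (heq ▸ hw)
      rw [hB, Finset.mem_filter, Finset.mem_range]
      refine ⟨by omega, ?_⟩
      rw [heq]
      exact hw.symm
    · intro w1 h1 w2 h2 h
      rw [Finset.mem_coe, SimpleGraph.mem_neighborFinset] at h1 h2
      obtain ⟨hl1, he1⟩ := idxlt w1 (hNk w1 h1)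
      obtain ⟨hl2, he2⟩ := idxlt w2 (hNk w2 h2)
      have h' : idx w1 = idx w2 := h
      rw [← he1, ← he2, h']
  -- crossing chords exist
  have hABne : ∃ t, t ∈ A ∩ B := by
    have hsub : A ∪ B ⊆ Finset.range (k-1) := by
      apply Finset.union_subset <;> exact Finset.filter_subset _ _
    have h1 : (A ∪ B).card ≤ k - 1 := le_trans (Finset.card_le_card hsub) (by simp)
    have h2 := Finset.card_union_add_card_inter A B
    have h3 := hdegv (F 0)
    have h4 := hdegv (F (k-1))
    have h5 : 0 < (A ∩ B).card := by omega
    obtain ⟨t, ht⟩ := Finset.card_pos.mp h5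
    exact ⟨t, ht⟩
  obtain ⟨t, htAB⟩ := hABne
  rw [Finset.mem_inter, hA, hB, Finset.mem_filter, Finset.mem_filter, Finset.mem_range] at htAB
  obtain ⟨⟨htk, ht1⟩, -, ht2⟩ := htAB
  -- the cycle through all path vertices
  set C : ℕ → V := fun a => if a ≤ t then F a else F (k + t - a) with hC
  have hCi : ∀ a, a < k → ∀ b, b < k → C a = C b → a = b := by
    intro a ha b hb h
    rcases le_or_gt a t with ha0 | ha0 <;> rcases le_or_gt b t with hb0 | hb0
    · rw [hC] at h; simp only [if_pos ha0, if_pos hb0] at h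
      exact hFi a ha b hb h
    · rw [hC] at h; simp only [if_pos ha0, if_neg (by omega : ¬ b ≤ t)] at h
      have := hFi a ha (k + t - b) (by omega) h
      omega
    · rw [hC] at h; simp only [if_neg (by omega : ¬ a ≤ t), if_pos hb0] at h
      have := hFi (k + t - a) (by omega) b hb h
      omega
    · rw [hC] at h; simp only [if_neg (by omega : ¬ a ≤ t), if_neg (by omega : ¬ b ≤ t)] at h
      have := hFi (k + t - a) (by omega) (k + t - b) (by omega) h
      omega
  have hCa : ∀ a, a + 1 < k → G.Adj (C a) (C (a+1)) := by
    intro a ha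
    rcases Nat.lt_or_ge (a+1) (t+1) with h1 | h1
    · rw [hC]; simp only [if_pos (by omega : a ≤ t), if_pos (by omega : a + 1 ≤ t)]
      exact hFa a (by omega)
    · rcases Nat.eq_or_lt_of_le h1 with h2 | h2
      · rw [hC]
        simp only [if_pos (by omega : a ≤ t), if_neg (by omega : ¬ a + 1 ≤ t)]
        have e2 : k + t - (a+1) = k - 1 := by omega
        rw [e2]
        have e1 : a = t := by omega
        rw [e1]
        exact ht2
      · rw [hC]
        simp only [if_neg (by omega : ¬ a ≤ t), if_neg (by omega : ¬ a + 1 ≤ t)]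
        have e1 : k + t - a = (k + t - (a+1)) + 1 := by omega
        rw [e1]
        exact (hFa (k + t - (a+1)) (by omega)).symm
  have hCw : G.Adj (C (k-1)) (C 0) := by
    rw [hC]
    simp only [if_neg (by omega : ¬ k - 1 ≤ t), if_pos (by omega : 0 ≤ t)]
    have e1 : k + t - (k-1) = t + 1 := by omega
    rw [e1]
    exact ht1
  -- cyclic adjacency
  have hcyc : ∀ c, G.Adj (C (c % k)) (C ((c+1) % k)) := by
    intro c
    have hck : c % k < k := Nat.mod_lt _ (by omega)
    have hone : 1 % k = 1 := Nat.mod_eq_of_lt (by omega)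
    have hkey : (c+1) % k = (c % k + 1) % k := by rw [Nat.add_mod, hone]
    rcases Nat.lt_or_ge (c % k + 1) k with h1 | h1
    · have he : (c+1) % k = c % k + 1 := by rw [hkey, Nat.mod_eq_of_lt h1]
      rw [he]
      exact hCa _ h1
    · have h2 : c % k = k - 1 := by omega
      have h3 : c % k + 1 = k := by omega
      have he : (c+1) % k = 0 := by rw [hkey, h3, Nat.mod_self]
      rw [he, h2]
      exact hCw
  by_cases hkn' : k = n
  · exact hkn' ▸ mkCycle G k (by omega) C hCi hCa hCw
  -- extend: contradiction
  · exfalso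
    have hkltn : k < n := by omega
    have himg : ((Finset.range k).image C).card = k := by
      rw [Finset.card_image_of_injOn, Finset.card_range]
      intro a ha b hb h
      exact hCi a (Finset.mem_range.mp ha) b (Finset.mem_range.mp hb) h
    obtain ⟨x, hx⟩ : ∃ x, x ∉ (Finset.range k).image C := by
      by_contra h
      push_neg at h
      have : Finset.univ ⊆ (Finset.range k).image C := fun y _ => h y
      have := Finset.card_le_card this
      simp only [Finset.card_univ, himg] at this
      omega
    have hxC : ∀ s, s < k → C s ≠ x := by
      intro s hs h
      exact hx (Finset.mem_image.mpr ⟨s, Finset.mem_range.mpr hs, h⟩)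
    have hxadj : ∃ s, s < k ∧ G.Adj x (C s) := by
      by_contra h
      push_neg at h
      have hsub : G.neighborFinset x ⊆ Finset.univ \ (insert x ((Finset.range k).image C)) := by
        intro w hw
        rw [SimpleGraph.mem_neighborFinset] at hw
        rw [Finset.mem_sdiff, Finset.mem_insert]
        refine ⟨Finset.mem_univ _, ?_⟩
        rintro (rfl | hwim)
        · exact G.irrefl hw
        · obtain ⟨s, hs, rfl⟩ := Finset.mem_image.mp hwim
          exact h s (Finset.mem_range.mp hs) hw
      have hxd : G.degree x + (k + 1) ≤ n := by
        have h6 := Finset.card_le_card hsub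
        rw [Finset.card_sdiff_of_subset (Finset.subset_univ _), Finset.card_univ,
          Finset.card_insert_of_notMem hx, himg, ← hnn] at h6
        have h7 : k + 1 ≤ n := by omega
        have h8 : G.degree x = (G.neighborFinset x).card := rfl
        omega
      have hsub0 : G.neighborFinset (F 0) ⊆ ((Finset.range k).image F).erase (F 0) := by
        intro w hw
        rw [SimpleGraph.mem_neighborFinset] at hw
        obtain ⟨s, hs, rfl⟩ := hN0 w hw
        rw [Finset.mem_erase]
        exact ⟨fun h => G.irrefl (h ▸ hw), Finset.mem_image.mpr ⟨s, Finset.mem_range.mpr hs, rfl⟩⟩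
      have hF0d : G.degree (F 0) + 1 ≤ k := by
        have h1 := Finset.card_le_card hsub0
        have h2 : (((Finset.range k).image F).erase (F 0)).card ≤ k - 1 := by
          have := Finset.card_erase_le (s := (Finset.range k).image F) (a := F 0)
          have h3 : ((Finset.range k).image F).card ≤ k :=
            le_trans (Finset.card_image_le) (by simp)
          have h4 : F 0 ∈ (Finset.range k).image F :=
            Finset.mem_image.mpr ⟨0, Finset.mem_range.mpr (by omega), rfl⟩
          rw [Finset.card_erase_of_mem h4]
          omega
        have h8 : G.degree (F 0) = (G.neighborFinset (F 0)).card := rfl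
        omega
      have d1 := hdegv x
      have d2 := hdegv (F 0)
      omega
    obtain ⟨s, hs, hxs⟩ := hxadj
    apply hmax
    refine ⟨fun a => if a = 0 then x else C ((s + (a-1)) % k), ?_, ?_⟩
    · intro a ha b hb hab
      dsimp only at hab
      rcases eq_or_ne a 0 with rfl | ha0 <;> rcases eq_or_ne b 0 with rfl | hb0
      · rfl
      · rw [if_pos rfl, if_neg hb0] at hab
        exact absurd hab.symm (hxC _ (Nat.mod_lt _ (by omega)))
      · rw [if_neg ha0, if_pos rfl] at hab
        exact absurd hab (hxC _ (Nat.mod_lt _ (by omega)))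
      · simp only [if_neg ha0, if_neg hb0] at hab
        have h1 := hCi _ (Nat.mod_lt _ (by omega)) _ (Nat.mod_lt _ (by omega)) hab
        have h2 : (a - 1) % k = (b - 1) % k := by
          have h3 : Nat.ModEq k (s + (a-1)) (s + (b-1)) := h1
          exact Nat.ModEq.add_left_cancel' s h3
        rw [Nat.mod_eq_of_lt (by omega), Nat.mod_eq_of_lt (by omega)] at h2
        omega
    · intro a ha
      rcases eq_or_ne a 0 with rfl | ha0
      · simp only [if_pos rfl, if_neg (by omega : (1:ℕ) ≠ 0)]
        have : (s + (1 - 1)) % k = s := by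
          simp [Nat.mod_eq_of_lt hs]
        rw [this]
        exact hxs
      · simp only [if_neg ha0, if_neg (by omega : a + 1 ≠ 0)]
        have e1 : a + 1 - 1 = (a - 1) + 1 := by omega
        rw [e1, ← Nat.add_assoc]
        exact hcyc (s + (a-1))


lemma hub {V : Type*} [Fintype V] (G : SimpleGraph V) [DecidableRel G.Adj]
    (hn : 3 ≤ Fintype.card V) (hdegv : ∀ v, Fintype.card V ≤ 2 * G.degree v)
    (hC : GraphHasCycleLength G (Fintype.card V - 1)) :
    ∀ ℓ, 3 ≤ ℓ → ℓ ≤ Fintype.card V - 1 → GraphHasCycleLength G ℓ := by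
  classical
  intro ℓ hl3 hln
  set n := Fintype.card V with hnn
  haveI : NeZero (n-1) := ⟨by omega⟩
  obtain ⟨g, hg, hgadj⟩ := hC
  have himg : (Finset.univ.image g).card = n - 1 := by
    rw [Finset.card_image_of_injective _ hg, Finset.card_univ, ZMod.card]
  obtain ⟨v, hv⟩ : ∃ v, v ∉ Finset.univ.image g := by
    by_contra h
    push_neg at h
    have h1 : Finset.univ ⊆ Finset.univ.image g := fun y _ => h y
    have h2 := Finset.card_le_card h1
    rw [Finset.card_univ, himg, ← hnn] at h2
    omega
  have hvg : ∀ i, v ≠ g i := by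
    intro i h
    exact hv (Finset.mem_image.mpr ⟨i, Finset.mem_univ _, h.symm⟩)
  have hrange : ∀ w : V, w ≠ v → ∃ t, g t = w := by
    have hsub : Finset.univ.image g ⊆ Finset.univ.erase v := by
      intro y hy
      rw [Finset.mem_erase]
      exact ⟨fun hc => hv (hc ▸ hy), Finset.mem_univ _⟩
    have hcards : (Finset.univ.erase v).card ≤ (Finset.univ.image g).card := by
      rw [himg, Finset.card_erase_of_mem (Finset.mem_univ _), Finset.card_univ, ← hnn]
    have heq := Finset.eq_of_subset_of_card_le hsub hcards
    intro w hw
    have : w ∈ Finset.univ.image g := by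
      rw [heq, Finset.mem_erase]
      exact ⟨hw, Finset.mem_univ _⟩
    obtain ⟨t, -, ht⟩ := Finset.mem_image.mp this
    exact ⟨t, ht⟩
  set idx : V → ZMod (n-1) := fun w => if h : ∃ t, g t = w then h.choose else 0 with hidx
  have idxspec : ∀ w, (∃ t, g t = w) → g (idx w) = w := by
    intro w h
    simp only [hidx, dif_pos h]
    exact h.choose_spec
  set W : Finset (ZMod (n-1)) := Finset.univ.filter (fun t => G.Adj v (g t)) with hW
  have hWcard : G.degree v ≤ W.card := by
    apply Finset.card_le_card_of_injOn idx
    · intro w hw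
      simp only [Finset.mem_coe] at hw ⊢
      rw [SimpleGraph.mem_neighborFinset] at hw
      have hex := hrange w (fun h' => G.irrefl (h' ▸ hw))
      rw [hW, Finset.mem_filter]
      refine ⟨Finset.mem_univ _, ?_⟩
      rw [idxspec w hex]
      exact hw
    · intro w1 h1 w2 h2 h
      rw [Finset.mem_coe, SimpleGraph.mem_neighborFinset] at h1 h2
      rw [← idxspec w1 (hrange w1 (fun h' => G.irrefl (h' ▸ h1))),
        ← idxspec w2 (hrange w2 (fun h' => G.irrefl (h' ▸ h2))), h]
  have hWbig : n - 1 < 2 * W.card := by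
    have := hdegv v
    omega
  obtain ⟨t, ht1, ht2⟩ := shift_inter W hWbig ((ℓ - 2 : ℕ) : ZMod (n-1))
  rw [hW, Finset.mem_filter] at ht1 ht2
  exact cycleThrough G g hg hgadj v hvg t ℓ hl3 (by omega) ht1.2 ht2.2


lemma structure_case {V : Type*} [Fintype V] (G : SimpleGraph V) [DecidableRel G.Adj]
    (n : ℕ) (hcard : Fintype.card V = n)
    (hn : 3 ≤ n) (hdegv : ∀ v, n ≤ 2 * G.degree v)
    (f : ZMod n → V) (hf : Function.Injective f)
    (hham : ∀ i, G.Adj (f i) (f (i+1)))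
    (hnoC : ¬ GraphHasCycleLength G (n - 1)) :
    Even n ∧ Nonempty (G ≃g completeBipartiteGraph (Fin (n / 2)) (Fin (n / 2))) := by
  classical
  haveI : NeZero n := ⟨by omega⟩
  have hbij : Function.Bijective f := by
    rw [Fintype.bijective_iff_injective_and_card]
    exact ⟨hf, by rw [ZMod.card, hcard]⟩
  set e : ZMod n ≃ V := Equiv.ofBijective f hbij with he
  set A : ZMod n → ZMod n → Prop := fun i j => G.Adj (f i) (f j) with hA
  have hAirr : ∀ i, ¬ A i i := fun i => G.irrefl
  have Cst : ∀ i j : ZMod n, j ≠ i → j ≠ i - 1 → ¬(A i j ∧ A (i+1) (j+2)) := by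
    rintro i j h1 h2 ⟨h3, h4⟩
    exact hnoC (chordPair G hn f hf hham h1 h2 h3 h4)
  have hdegX : ∀ i : ZMod n, n ≤ 2 * (Finset.univ.filter (A i)).card := by
    intro i
    have hle : G.degree (f i) ≤ (Finset.univ.filter (A i)).card := by
      apply Finset.card_le_card_of_injOn (fun w => e.symm w)
      · intro w hw
        simp only [Finset.mem_coe] at hw ⊢
        rw [SimpleGraph.mem_neighborFinset] at hw
        rw [Finset.mem_filter]
        refine ⟨Finset.mem_univ _, ?_⟩
        show G.Adj (f i) (f (e.symm w))
        have hw' : f (e.symm w) = w := e.apply_symm_apply w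
        rw [hw']
        exact hw
      · intro w1 _ w2 _ h
        exact e.symm.injective h
    have := hdegv (f i)
    omega
  -- the key exchange relation
  have R : ∀ i k : ZMod n, k ≠ i + 1 → (A (i+1) k ↔ ¬ A i (k - 2)) := by
    intro i k hk
    set X : Finset (ZMod n) := Finset.univ.filter (A i) with hX
    set Y : Finset (ZMod n) := Finset.univ.filter (A (i+1)) with hY
    have hmemX : ∀ j, j ∈ X ↔ A i j := by
      intro j; rw [hX, Finset.mem_filter]; simp
    have hmemY : ∀ j, j ∈ Y ↔ A (i+1) j := by
      intro j; rw [hY, Finset.mem_filter]; simp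
    have him1X : i - 1 ∈ X := by
      rw [hmemX]
      show G.Adj (f i) (f (i-1))
      have h5 := (hham (i-1)).symm
      rw [sub_add_cancel] at h5
      exact h5
    have hiY : i + 1 ∉ Y := by rw [hmemY]; exact hAirr _
    obtain ⟨S, hS⟩ : ∃ S : Finset (ZMod n), S = (X.erase (i-1)).image (· + 2) := ⟨_, rfl⟩
    have hsub : S ⊆ (Finset.univ \ Y).erase (i+1) := by
      intro y hy
      rw [hS, Finset.mem_image] at hy
      obtain ⟨j, hj, rfl⟩ := hy
      rw [Finset.mem_erase] at hj
      obtain ⟨hj1, hj2⟩ := hj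
      rw [hmemX] at hj2
      have hji : j ≠ i := fun h => hAirr i (h ▸ hj2)
      rw [Finset.mem_erase, Finset.mem_sdiff]
      refine ⟨?_, Finset.mem_univ _, ?_⟩
      · intro h
        apply hj1
        have : j = i + 1 - 2 := by linear_combination h
        rw [this]; ring
      · rw [hmemY]
        intro h
        exact Cst i j hji hj1 ⟨hj2, h⟩
    have hScard : S.card = X.card - 1 := by
      rw [hS, Finset.card_image_of_injective _ (add_left_injective 2),
        Finset.card_erase_of_mem him1X]
    have hTcard : ((Finset.univ \ Y).erase (i+1)).card = n - Y.card - 1 := by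
      rw [Finset.card_erase_of_mem (by rw [Finset.mem_sdiff]; exact ⟨Finset.mem_univ _, hiY⟩),
        Finset.card_sdiff_of_subset (Finset.subset_univ _), Finset.card_univ, ZMod.card]
    have hXpos : 1 ≤ X.card := Finset.card_pos.mpr ⟨i - 1, him1X⟩
    have hYle : Y.card ≤ n := by
      have := Finset.card_le_univ Y
      rwa [ZMod.card] at this
    have hYlt : Y.card + 1 ≤ n := by
      have hsub2 : Y ⊆ Finset.univ.erase (i+1) := by
        intro y hy
        rw [Finset.mem_erase]
        exact ⟨fun hc => hiY (hc ▸ hy), Finset.mem_univ _⟩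
      have h9 := Finset.card_le_card hsub2
      rw [Finset.card_erase_of_mem (Finset.mem_univ _), Finset.card_univ, ZMod.card] at h9
      omega
    have hXY : X.card + Y.card ≤ n := by
      have h1 := Finset.card_le_card hsub
      rw [hScard, hTcard] at h1
      omega
    have hXY' : X.card + Y.card = n := by
      have h1 := hdegX i
      have h2 := hdegX (i+1)
      rw [← hX] at h1
      rw [← hY] at h2
      omega
    have hSeq : S = (Finset.univ \ Y).erase (i+1) := by
      apply Finset.eq_of_subset_of_card_le hsub
      rw [hScard, hTcard]
      omega
    constructor
    · intro h1 h2
      have hki : k - 2 ≠ i := by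
        intro h
        exact hAirr i (h ▸ h2)
      have hki' : k - 2 ≠ i - 1 := by
        intro h
        apply hk
        linear_combination h
      apply Cst i (k-2) hki hki'
      refine ⟨h2, ?_⟩
      have h6 : k - 2 + 2 = k := by ring
      rwa [h6]
    · intro h2
      have hkS : k ∉ S := by
        intro h
        rw [hS, Finset.mem_image] at h
        obtain ⟨j, hj, hj2⟩ := h
        rw [Finset.mem_erase, hmemX] at hj
        apply h2
        have h7 : j = k - 2 := by linear_combination hj2
        exact h7 ▸ hj.2
      rw [hSeq, Finset.mem_erase] at hkS
      push_neg at hkS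
      have h4 : k ∉ Finset.univ \ Y := hkS hk
      by_contra h3
      exact h4 (Finset.mem_sdiff.mpr ⟨Finset.mem_univ _, fun hkY => h3 ((hmemY k).mp hkY)⟩)
  -- parity classification along the cycle
  have Par : ∀ s : ℕ, 1 ≤ s → s ≤ n - 1 → ∀ i, (A i (i + (s : ZMod n)) ↔ Odd s) := by
    intro s
    induction s with
    | zero => omega
    | succ t ih =>
      intro h1 h2 i
      rcases Nat.eq_zero_or_pos t with rfl | ht1
      · have hone : ((0 + 1 : ℕ) : ZMod n) = 1 := by simp
        rw [hone]
        constructor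
        · intro _; exact ⟨0, by ring⟩
        · intro _; exact hham i
      · have ht2 : t ≤ n - 1 := by omega
        have hcast : ((t+1 : ℕ) : ZMod n) ≠ 0 := by
          intro h
          have h5 := congrArg ZMod.val h
          rw [ZMod.val_natCast, Nat.mod_eq_of_lt (by omega), ZMod.val_zero] at h5
          omega
        have hR := R (i - 1) (i + ((t+1 : ℕ) : ZMod n)) (by
          rw [sub_add_cancel]
          intro h
          exact hcast (by linear_combination h))
        rw [sub_add_cancel] at hR
        have harg : i + ((t+1 : ℕ) : ZMod n) - 2 = (i - 1) + ((t : ℕ) : ZMod n) := by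
          push_cast; ring
        rw [harg] at hR
        rw [hR, ih ht1 ht2 (i-1)]
        rw [Nat.odd_add_one]
  have hEven : Even n := by
    have hcast : ((n-1 : ℕ) : ZMod n) = -1 := by
      push_cast [Nat.cast_sub (by omega : 1 ≤ n)]
      rw [ZMod.natCast_self]
      ring
    have h1 : A 0 (0 + ((n-1 : ℕ) : ZMod n)) := by
      rw [hcast]
      show G.Adj (f 0) (f (0 + -1))
      have h5 := hham (0 + -1)
      have h6 : (0 : ZMod n) + -1 + 1 = 0 := by ring
      rw [h6] at h5
      exact h5.symm
    have hodd := (Par (n-1) (by omega) le_rfl 0).mp h1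
    rw [Nat.odd_iff] at hodd
    rw [Nat.even_iff]
    omega
  refine ⟨hEven, ?_⟩
  have hClass : ∀ i j : ZMod n, i ≠ j → (A i j ↔ Odd ((j - i).val)) := by
    intro i j hij
    have h0 : j - i ≠ 0 := sub_ne_zero_of_ne (Ne.symm hij)
    have h1 : 1 ≤ (j - i).val := by
      rcases Nat.eq_zero_or_pos (j-i).val with h | h
      · exact absurd ((ZMod.val_eq_zero (j-i)).mp h) h0
      · exact h
    have h2 : (j - i).val ≤ n - 1 := by have := ZMod.val_lt (j-i); omega
    have h3 := Par _ h1 h2 i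
    rw [natCast_val_eq] at h3
    rw [show i + (j - i) = j from by ring] at h3
    exact h3
  -- build the isomorphism
  have hm : n = 2 * (n / 2) := by
    rcases hEven with ⟨c, hc⟩
    omega
  set m := n / 2 with hmdef
  have hmod2 : (2 : ℕ) ∣ n := ⟨m, hm⟩
  have hparval : ∀ t : ℕ, ((t : ZMod n)).val % 2 = t % 2 := by
    intro t
    rw [ZMod.val_natCast]
    exact (Nat.mod_modEq t n).of_dvd hmod2
  have hsubval : ∀ t u : ℕ, t < n → ((u : ZMod n) - (t : ZMod n)).val % 2 = (u + (n - t)) % 2 := by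
    intro t u ht
    have hc : ((u + (n - t) : ℕ) : ZMod n) = (u : ZMod n) - t := by
      push_cast [Nat.cast_sub (le_of_lt ht)]
      rw [ZMod.natCast_self]
      ring
    rw [← hc, hparval]
  have hAiff : ∀ t u : ℕ, t < n → u < n → t ≠ u → (A ↑t ↑u ↔ (t + u) % 2 = 1) := by
    intro t u ht hu htu
    have hne : (t : ZMod n) ≠ (u : ZMod n) := by
      intro h
      have h5 := congrArg ZMod.val h
      rw [ZMod.val_natCast, ZMod.val_natCast, Nat.mod_eq_of_lt ht, Nat.mod_eq_of_lt hu] at h5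
      exact htu h5
    rw [hClass _ _ hne, Nat.odd_iff, hsubval t u ht]
    constructor <;> intro h <;> omega
  have hlt1 : ∀ a : Fin m, 2 * a.val < n := fun a => by have := a.isLt; omega
  have hlt2 : ∀ a : Fin m, 2 * a.val + 1 < n := fun a => by have := a.isLt; omega
  set toF : Fin m ⊕ Fin m → ZMod n :=
    Sum.elim (fun a => ((2 * a.val : ℕ) : ZMod n)) (fun a => ((2 * a.val + 1 : ℕ) : ZMod n))
    with htoF
  set invF : ZMod n → Fin m ⊕ Fin m := fun x =>
    if x.val % 2 = 0 then Sum.inl ⟨x.val / 2, by have := ZMod.val_lt x; omega⟩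
    else Sum.inr ⟨x.val / 2, by have := ZMod.val_lt x; omega⟩ with hinvF
  have hli : ∀ z, invF (toF z) = z := by
    intro z
    cases z with
    | inl a =>
      have hv : ((2 * a.val : ℕ) : ZMod n).val = 2 * a.val := by
        rw [ZMod.val_natCast, Nat.mod_eq_of_lt (hlt1 a)]
      show invF _ = _
      rw [htoF]
      simp only [Sum.elim_inl, hinvF]
      rw [if_pos (by rw [hv]; omega)]
      congr 1
      apply Fin.ext
      simp only [hv]
      omega
    | inr a =>
      have hv : ((2 * a.val + 1 : ℕ) : ZMod n).val = 2 * a.val + 1 := by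
        rw [ZMod.val_natCast, Nat.mod_eq_of_lt (hlt2 a)]
      show invF _ = _
      rw [htoF]
      simp only [Sum.elim_inr, hinvF]
      rw [if_neg (by rw [hv]; omega)]
      congr 1
      apply Fin.ext
      simp only [hv]
      omega
  have hri : ∀ x, toF (invF x) = x := by
    intro x
    rw [hinvF]
    dsimp only
    rcases Nat.eq_zero_or_pos (x.val % 2) with h | h
    · rw [if_pos h, htoF]
      simp only [Sum.elim_inl]
      have h5 : 2 * (x.val / 2) = x.val := by omega
      rw [h5, natCast_val_eq]
    · rw [if_neg (by omega), htoF]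
      simp only [Sum.elim_inr]
      have h5 : 2 * (x.val / 2) + 1 = x.val := by omega
      rw [h5, natCast_val_eq]
  set eq0 : Fin m ⊕ Fin m ≃ ZMod n := ⟨toF, invF, hli, hri⟩ with heq0
  set eV : Fin m ⊕ Fin m ≃ V := eq0.trans e with heV
  refine ⟨(SimpleGraph.Iso.symm ⟨eV, ?_⟩ : G ≃g completeBipartiteGraph (Fin m) (Fin m))⟩
  intro x y
  cases x with
  | inl a =>
    cases y with
    | inl b =>
      show A ((2 * a.val : ℕ) : ZMod n) ((2 * b.val : ℕ) : ZMod n) ↔ _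
      rcases eq_or_ne a b with rfl | hab
      · constructor
        · intro h; exact absurd h (hAirr _)
        · rintro (⟨-, h⟩ | ⟨h, -⟩) <;> simp at h
      · have hab' : 2 * a.val ≠ 2 * b.val := by
          intro h; exact hab (Fin.ext (by omega))
        rw [hAiff _ _ (hlt1 a) (hlt1 b) hab']
        constructor
        · intro h; omega
        · rintro (⟨-, h⟩ | ⟨h, -⟩) <;> simp at h
    | inr b =>
      show A ((2 * a.val : ℕ) : ZMod n) ((2 * b.val + 1 : ℕ) : ZMod n) ↔ _
      have hab' : 2 * a.val ≠ 2 * b.val + 1 := by omega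
      rw [hAiff _ _ (hlt1 a) (hlt2 b) hab']
      constructor
      · intro h
        left
        exact ⟨rfl, rfl⟩
      · intro h
        omega
  | inr a =>
    cases y with
    | inl b =>
      show A ((2 * a.val + 1 : ℕ) : ZMod n) ((2 * b.val : ℕ) : ZMod n) ↔ _
      have hab' : 2 * a.val + 1 ≠ 2 * b.val := by omega
      rw [hAiff _ _ (hlt2 a) (hlt1 b) hab']
      constructor
      · intro h
        right
        exact ⟨rfl, rfl⟩
      · intro h
        omega
    | inr b =>
      show A ((2 * a.val + 1 : ℕ) : ZMod n) ((2 * b.val + 1 : ℕ) : ZMod n) ↔ _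
      rcases eq_or_ne a b with rfl | hab
      · constructor
        · intro h; exact absurd h (hAirr _)
        · rintro (⟨h, -⟩ | ⟨-, h⟩) <;> simp at h
      · have hab' : 2 * a.val + 1 ≠ 2 * b.val + 1 := by
          intro h; exact hab (Fin.ext (by omega))
        rw [hAiff _ _ (hlt2 a) (hlt2 b) hab']
        constructor
        · intro h; omega
        · rintro (⟨h, -⟩ | ⟨-, h⟩) <;> simp at h


end BondyAux

theorem bondy_pancyclic (V : Type*) [Fintype V] (G : SimpleGraph V) [DecidableRel G.Adj]
    (hdeg : Fintype.card V ≤ 2 * G.minDegree) :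
    (∀ ℓ : ℕ, 3 ≤ ℓ → ℓ ≤ Fintype.card V → GraphHasCycleLength G ℓ) ∨
    (Even (Fintype.card V) ∧
      Nonempty (G ≃g completeBipartiteGraph (Fin (Fintype.card V / 2))
        (Fin (Fintype.card V / 2)))) := by
  classical
  by_cases hn : 3 ≤ Fintype.card V
  · have hdegv : ∀ v, Fintype.card V ≤ 2 * G.degree v := fun v =>
      le_trans hdeg (by have := G.minDegree_le_degree v; omega)
    have hham := BondyAux.dirac G hn hdeg
    by_cases hC : GraphHasCycleLength G (Fintype.card V - 1)
    · left
      intro ℓ h3 hl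
      rcases Nat.eq_or_lt_of_le hl with rfl | hl'
      · exact hham
      · exact BondyAux.hub G hn hdegv hC ℓ h3 (by omega)
    · right
      obtain ⟨f, hf, hfadj⟩ := hham
      exact BondyAux.structure_case G (Fintype.card V) rfl hn hdegv f hf hfadj hC
  · left
    intro ℓ h3 hl
    omega
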